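/- Let (V, μ) be a weighted graph of finite measure with a rooted spanning tree (root a), and let f ∈ ℓ¹(V,μ) with Σ_{s∈V} f(s)μ(s) = 0. With f_t defined by f_t(t) = f(t) + (1/μ(t)) Σ_{k ≻ t} f(k)μ(k), f_t(t_p) = −(1/μ(t_p)) Σ_{k ⪰ t} f(k)μ(k), and f_t(s) = 0 otherwise, the decomposition f(s) = Σ_{t ∈ V, t ≠ a} f_t(s) holds for every s ∈ V (including the root, using the mean-zero hypothesis). -/

import Mathlib

open Classical

/-- Rooted spanning tree encoded by a parent map: `s ⪰ t` iff `∃ n, p^[n] s = t`;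
the shadow of `t` is `S_t = {s | s ⪰ t}`. -/
def shadow {V : Type*} (p : V → V) (t : V) : Set V :=
  {s | ∃ n : ℕ, p^[n] s = t}

/-- The decomposition functions: for a vertex `t` (other than the root), `f_t` is supported
on `{t, t_p}` (`t_p = p t` is the parent of `t`) with
`f_t(t) = f(t) + (1/μ(t)) ∑_{k ≻ t} f(k) μ(k)` and
`f_t(t_p) = -(1/μ(t_p)) ∑_{k ⪰ t} f(k) μ(k)`. -/
noncomputable def decompFn {V : Type*} (p : V → V) (μ f : V → ℝ) (t : V) : V → ℝ :=
  fun s =>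
    if s = t then
      f t + (1 / μ t) * ∑' k : {k : V // k ∈ shadow p t ∧ k ≠ t}, f k.1 * μ k.1
    else if s = p t then
      -((1 / μ (p t)) * ∑' k : shadow p t, f k.1 * μ k.1)
    else 0

section Aux
variable {V : Type*} {p : V → V} {a : V}

lemma cycle_eq_root (hroot : p a = a) (hreach : ∀ t : V, ∃ n : ℕ, p^[n] t = a)
    {s : V} {j : ℕ} (hj : 1 ≤ j) (hcyc : p^[j] s = s) : s = a := by
  obtain ⟨N, hN⟩ := hreach s
  have hfix : ∀ m, p^[j * m] s = s := by
    intro m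
    induction m with
    | zero => simp
    | succ m ih =>
      rw [Nat.mul_succ, Function.iterate_add_apply, hcyc, ih]
  have hge : N ≤ j * N := Nat.le_mul_of_pos_left N hj
  calc s = p^[j * N] s := (hfix N).symm
    _ = a := by
        rw [← Nat.sub_add_cancel hge, Function.iterate_add_apply, hN,
          Function.iterate_fixed hroot]

lemma shadow_child_subset {t s k : V} (ht : p t = s) (hk : k ∈ shadow p t) :
    k ∈ shadow p s := by
  obtain ⟨n, hn⟩ := hk
  exact ⟨n + 1, by rw [Function.iterate_succ_apply', hn, ht]⟩

lemma ne_of_child (hroot : p a = a) (hreach : ∀ t : V, ∃ n : ℕ, p^[n] t = a)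
    {t s k : V} (ht : p t = s) (hts : t ≠ s) (hk : k ∈ shadow p t) : k ≠ s := by
  rintro rfl
  obtain ⟨n, hn⟩ := hk
  have hcyc : p^[n + 1] k = k := by rw [Function.iterate_succ_apply', hn, ht]
  have hka : k = a := cycle_eq_root hroot hreach (Nat.succ_le_succ (Nat.zero_le n)) hcyc
  subst hka
  rw [Function.iterate_fixed hroot n] at hn
  exact hts hn.symm

lemma child_step (hroot : p a = a) (hreach : ∀ t : V, ∃ n : ℕ, p^[n] t = a)
    {s t1 t2 k : V} {m n : ℕ} (h1 : p t1 = s) (h2 : p t2 = s) (hs2 : t2 ≠ s)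
    (hm : p^[m] k = t1) (hn : p^[n] k = t2) (hmn : m ≤ n) : t1 = t2 := by
  have hstep : p^[n - m] t1 = t2 := by
    rw [← hm, ← Function.iterate_add_apply, Nat.sub_add_cancel hmn, hn]
  rcases Nat.eq_zero_or_pos (n - m) with h0 | hpos
  · rw [h0] at hstep; exact hstep
  · exfalso
    obtain ⟨d, hd⟩ : ∃ d, n - m = d + 1 := ⟨n - m - 1, by omega⟩
    rw [hd, Function.iterate_succ_apply, h1] at hstep
    rcases Nat.eq_zero_or_pos d with hd0 | hdpos
    · rw [hd0] at hstep; exact hs2 hstep.symm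
    · have hcyc : p^[d + 1] s = s := by rw [Function.iterate_succ_apply', hstep, h2]
      have hsa : s = a := cycle_eq_root hroot hreach (Nat.succ_le_succ (Nat.zero_le d)) hcyc
      subst hsa
      rw [Function.iterate_fixed hroot d] at hstep
      exact hs2 hstep.symm

lemma child_disjoint (hroot : p a = a) (hreach : ∀ t : V, ∃ n : ℕ, p^[n] t = a)
    {s t1 t2 k : V} (h1 : p t1 = s) (h2 : p t2 = s) (hs1 : t1 ≠ s) (hs2 : t2 ≠ s)
    (hk1 : k ∈ shadow p t1) (hk2 : k ∈ shadow p t2) : t1 = t2 := by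
  obtain ⟨m, hm⟩ := hk1
  obtain ⟨n, hn⟩ := hk2
  rcases le_total m n with h | h
  · exact child_step hroot hreach h1 h2 hs2 hm hn h
  · exact (child_step hroot hreach h2 h1 hs1 hn hm h).symm

end Aux

/-- The decomposition `f(s) = ∑_{t ≠ a} f_t(s)` holds at every vertex `s` (including the
root, using the mean-zero hypothesis), the sum converging to `f(s)`. -/
theorem decomp_of_mean_zero {V : Type*} [Countable V] (p : V → V) (a : V)
    (hroot : p a = a) (hreach : ∀ t : V, ∃ n : ℕ, p^[n] t = a)
    (μ : V → ℝ) (hμpos : ∀ t, 0 < μ t) (hμsum : Summable μ)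
    (f : V → ℝ) (hf : Summable fun s => |f s| * μ s)
    (hmean : (∑' s : V, f s * μ s) = 0) :
    ∀ s : V, HasSum (fun t : {t : V // t ≠ a} => decompFn p μ f t.1 s) (f s) := by
  classical
  have hgsum : Summable (fun k : V => f k * μ k) := by
    rw [← summable_abs_iff]
    have : (fun k : V => |f k * μ k|) = fun k : V => |f k| * μ k := by
      funext k
      rw [abs_mul, abs_of_pos (hμpos k)]
    rw [this]
    exact hf
  intro s
  -- pointwise description of the summand
  have heq : ∀ t : {t : V // t ≠ a},
      decompFn p μ f t.1 s =
        (if t.1 = s then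
          f s + (1 / μ s) * ∑' k : {k : V // k ∈ shadow p s ∧ k ≠ s}, f k.1 * μ k.1
        else 0)
        + (if p t.1 = s ∧ t.1 ≠ s then
            -((1 / μ s) * ∑' k : shadow p t.1, f k.1 * μ k.1)
          else 0) := by
    intro t
    by_cases h1 : t.1 = s
    · have h1' : s = t.1 := h1.symm
      subst h1'
      simp [decompFn]
    · by_cases h2 : p t.1 = s
      · simp only [decompFn]
        rw [if_neg (fun h => h1 h.symm), if_pos h2.symm, if_neg h1, if_pos ⟨h2, h1⟩, h2,
          zero_add]
      · simp only [decompFn]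
        rw [if_neg (fun h => h1 h.symm), if_neg (fun h => h2 h.symm), if_neg h1,
          if_neg (fun h => h2 h.1), add_zero]
  -- the children sigma decomposition of the punctured shadow of s
  let Ch := {t : V // p t = s ∧ t ≠ s}
  let D := {k : V // k ∈ shadow p s ∧ k ≠ s}
  let φ : (Σ t : Ch, shadow p (t : V)) → D := fun x =>
    ⟨x.2.1, shadow_child_subset x.1.2.1 x.2.2,
      ne_of_child hroot hreach x.1.2.1 x.1.2.2 x.2.2⟩
  have hinj : Function.Injective φ := by
    rintro ⟨t1, k1⟩ ⟨t2, k2⟩ h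
    have hk : (k1 : V) = (k2 : V) := congrArg Subtype.val h
    have ht : t1 = t2 := by
      apply Subtype.ext
      refine child_disjoint hroot hreach t1.2.1 t2.2.1 t1.2.2 t2.2.2 k1.2 ?_
      rw [hk]; exact k2.2
    subst ht
    exact congrArg (Sigma.mk t1) (Subtype.ext hk)
  have hsurj : Function.Surjective φ := by
    rintro ⟨k, hks, hkne⟩
    have hex : ∃ n, p^[n] k = s := hks
    have hn : p^[Nat.find hex] k = s := Nat.find_spec hex
    have hn1 : 1 ≤ Nat.find hex := by
      rcases Nat.eq_zero_or_pos (Nat.find hex) with h0 | h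
      · exfalso; apply hkne; rw [h0] at hn; exact hn
      · exact h
    have hpt : p (p^[Nat.find hex - 1] k) = s := by
      have h' : p^[Nat.find hex - 1 + 1] k = p (p^[Nat.find hex - 1] k) :=
        Function.iterate_succ_apply' p _ k
      rw [Nat.sub_add_cancel hn1, hn] at h'
      exact h'.symm
    have hne : p^[Nat.find hex - 1] k ≠ s := fun h =>
      Nat.find_min hex (by omega) h
    exact ⟨⟨⟨p^[Nat.find hex - 1] k, hpt, hne⟩, ⟨k, Nat.find hex - 1, rfl⟩⟩, rfl⟩
  let e : (Σ t : Ch, shadow p (t : V)) ≃ D := Equiv.ofBijective φ ⟨hinj, hsurj⟩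
  have hTsum : HasSum (fun k : D => f k.1 * μ k.1)
      (∑' k : D, f k.1 * μ k.1) :=
    (hgsum.comp_injective Subtype.val_injective).hasSum
  have hsig : HasSum (fun x : Σ t : Ch, shadow p (t : V) => f x.2.1 * μ x.2.1)
      (∑' k : D, f k.1 * μ k.1) := (Equiv.hasSum_iff e).mpr hTsum
  have hCh : HasSum (fun t : Ch => ∑' k : shadow p (t : V), f k.1 * μ k.1)
      (∑' k : D, f k.1 * μ k.1) :=
    hsig.sigma fun t => (hgsum.comp_injective Subtype.val_injective).hasSum
  have hB : HasSum (fun t : Ch => -((1 / μ s) * ∑' k : shadow p (t : V), f k.1 * μ k.1))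
      (-((1 / μ s) * ∑' k : D, f k.1 * μ k.1)) := (hCh.mul_left _).neg
  -- transport along the inclusion of children into vertices ≠ a
  have hchild_ne_a : ∀ t : Ch, (t : V) ≠ a := by
    rintro ⟨t, hpt, hts⟩ h
    dsimp at h
    subst h
    exact hts (by rw [← hpt, hroot])
  let ι : Ch → {t : V // t ≠ a} := fun t => ⟨t.1, hchild_ne_a t⟩
  have hι_inj : Function.Injective ι := fun x y h =>
    Subtype.ext (congrArg (fun z : {t : V // t ≠ a} => z.1) h)
  let F2 : {t : V // t ≠ a} → ℝ := fun t =>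
    if p t.1 = s ∧ t.1 ≠ s then -((1 / μ s) * ∑' k : shadow p t.1, f k.1 * μ k.1) else 0
  have hsupp : ∀ x ∉ Set.range ι, F2 x = 0 := by
    intro x hx
    simp only [F2]
    rw [if_neg]
    rintro ⟨h1, h2⟩
    exact hx ⟨⟨x.1, h1, h2⟩, rfl⟩
  have hcompeq : F2 ∘ ι = fun t : Ch =>
      -((1 / μ s) * ∑' k : shadow p (t : V), f k.1 * μ k.1) := by
    funext t
    simp only [F2, ι, Function.comp_apply]
    rw [if_pos ⟨t.2.1, t.2.2⟩]
  have hF2 : HasSum F2 (-((1 / μ s) * ∑' k : D, f k.1 * μ k.1)) := by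
    rw [← hι_inj.hasSum_iff hsupp, hcompeq]
    exact hB
  -- the singleton piece
  let A : ℝ := f s + (1 / μ s) * ∑' k : {k : V // k ∈ shadow p s ∧ k ≠ s}, f k.1 * μ k.1
  let F1 : {t : V // t ≠ a} → ℝ := fun t => if t.1 = s then A else 0
  have hF1 : HasSum F1 (if s = a then 0 else A) := by
    by_cases hsa : s = a
    · rw [if_pos hsa]
      have : F1 = fun _ => 0 := by
        funext t
        exact if_neg (by rw [hsa]; exact t.2)
      rw [this]
      exact hasSum_zero
    · rw [if_neg hsa]
      have : F1 = fun t => if t = (⟨s, hsa⟩ : {t : V // t ≠ a}) then A else 0 := by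
        funext t
        simp only [F1, Subtype.ext_iff]
      rw [this]
      exact hasSum_ite_eq _ _
  -- assemble
  have hfe : (fun t : {t : V // t ≠ a} => decompFn p μ f t.1 s)
      = fun t : {t : V // t ≠ a} => F1 t + F2 t := funext heq
  have hval : (if s = a then 0 else A)
      + -((1 / μ s) * ∑' k : D, f k.1 * μ k.1) = f s := by
    by_cases hsa : s = a
    · rw [if_pos hsa]
      let eq2 : D ≃ {x : V // x ∈ (↑({s} : Finset V) : Set V)ᶜ} :=
        { toFun := fun k => ⟨k.1, by
            simp only [Finset.coe_singleton, Set.mem_compl_iff, Set.mem_singleton_iff]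
            exact k.2.2⟩
          invFun := fun x => ⟨x.1, ⟨by
            obtain ⟨n, hn⟩ := hreach x.1
            exact ⟨n, hn.trans hsa.symm⟩, by
            have := x.2
            simpa only [Finset.coe_singleton, Set.mem_compl_iff,
              Set.mem_singleton_iff] using this⟩⟩
          left_inv := fun k => rfl
          right_inv := fun x => rfl }
      have h1 : (∑' k : D, f k.1 * μ k.1)
          = ∑' x : {x : V // x ∈ (↑({s} : Finset V) : Set V)ᶜ}, f x.1 * μ x.1 :=
        eq2.tsum_eq (fun x => f x.1 * μ x.1)
      have h2 := hgsum.sum_add_tsum_compl (s := ({s} : Finset V))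
      rw [Finset.sum_singleton, hmean] at h2
      have hTa : (∑' k : D, f k.1 * μ k.1) = -(f s * μ s) := by
        rw [h1]; linarith
      rw [hTa]
      have hμ : μ s ≠ 0 := (hμpos s).ne'
      field_simp
      ring
    · rw [if_neg hsa]
      show (f s + (1 / μ s) * ∑' k : {k : V // k ∈ shadow p s ∧ k ≠ s}, f k.1 * μ k.1)
          + -((1 / μ s) * ∑' k : {k : V // k ∈ shadow p s ∧ k ≠ s}, f k.1 * μ k.1) = f s
      ring
  rw [hfe, ← hval]
  exact hF1.add hF2
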